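/- In the single-field General Lotto game with Scouts with budgets B, R > 0 and detection probability u ∈ [0,1), if B/R ≥ 1, then the value of the game equals 1 - (1-u)²/(2((B/R) - u)). -/

import Mathlib

open MeasureTheory Set
open scoped ENNReal

/-- A strategy for Red in the General Lotto game with Scouts: the law of a nonnegative
random variable `X` with `E[X] ≤ R`. -/
structure RedStrategy (R : ℝ) where
  μ : Measure ℝ
  prob : IsProbabilityMeasure μ
  nonneg : μ (Iio 0) = 0
  budget : ∫⁻ x, ENNReal.ofReal x ∂μ ≤ ENNReal.ofReal R

/-- A strategy for Blue in GL-S(B,R,u): a calling probability `t x ∈ [0,1]` used when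
Red's allocation `x` is revealed (probability `u`), and the law `ν` of the nonnegative
allocation `Z` used when it is not revealed.  Feasibility: for every feasible Red
strategy, `u·E[t(X)·X] + (1-u)·E[Z] ≤ B`. -/
structure BlueStrategy (B R u : ℝ) where
  t : ℝ → ℝ
  t_mble : Measurable t
  t_mem : ∀ x, t x ∈ Icc (0 : ℝ) 1
  ν : Measure ℝ
  prob : IsProbabilityMeasure ν
  nonneg : ν (Iio 0) = 0
  budget : ∀ σR : RedStrategy R,
    ENNReal.ofReal u * ∫⁻ x, ENNReal.ofReal (t x * x) ∂σR.μ
      + ENNReal.ofReal (1 - u) * ∫⁻ z, ENNReal.ofReal z ∂ν ≤ ENNReal.ofReal B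

/-- Expected payoff to Blue (his win probability):
`u·E[t(X)] + (1-u)·P(Z ≥ X)`, ties going to Blue. -/
noncomputable def payoff {B R u : ℝ} (σB : BlueStrategy B R u) (σR : RedStrategy R) :
    ENNReal :=
  ENNReal.ofReal u * ∫⁻ x, ENNReal.ofReal (σB.t x) ∂σR.μ
    + ENNReal.ofReal (1 - u) * ∫⁻ x, σB.ν {z | x ≤ z} ∂σR.μ

noncomputable def unif (c : ℝ) : Measure ℝ :=
  (ENNReal.ofReal c)⁻¹ • (volume.restrict (Icc 0 c))

lemma unif_apply (c : ℝ) (s : Set ℝ) (hs : MeasurableSet s) :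
    unif c s = (ENNReal.ofReal c)⁻¹ * volume (s ∩ Icc 0 c) := by
  rw [unif, Measure.smul_apply, Measure.restrict_apply hs, smul_eq_mul]

lemma unif_prob (c : ℝ) (hc : 0 < c) : IsProbabilityMeasure (unif c) := by
  constructor
  rw [unif_apply c _ MeasurableSet.univ, univ_inter, Real.volume_Icc, sub_zero,
    ENNReal.inv_mul_cancel (by simpa using hc) ENNReal.ofReal_ne_top]

lemma unif_nonneg (c : ℝ) : unif c (Iio 0) = 0 := by
  rw [unif_apply c _ measurableSet_Iio]
  have : Iio (0:ℝ) ∩ Icc 0 c = ∅ := by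
    ext x; simp only [mem_inter_iff, mem_Iio, mem_Icc, mem_empty_iff_false, iff_false]
    rintro ⟨h1, h2, _⟩; linarith
  rw [this, measure_empty, mul_zero]

lemma lintegral_id_Icc (c : ℝ) (hc : 0 < c) :
    ∫⁻ x in Icc 0 c, ENNReal.ofReal x = ENNReal.ofReal (c^2/2) := by
  rw [← ofReal_integral_eq_lintegral_ofReal]
  · rw [integral_Icc_eq_integral_Ioc, ← intervalIntegral.integral_of_le hc.le, integral_id]
    ring_nf
  · exact (continuous_id.integrableOn_Icc)
  · filter_upwards [ae_restrict_mem measurableSet_Icc] with x hx using hx.1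

lemma unif_mean (c : ℝ) (hc : 0 < c) :
    ∫⁻ x, ENNReal.ofReal x ∂(unif c) = ENNReal.ofReal (c/2) := by
  rw [unif, lintegral_smul_measure, smul_eq_mul, lintegral_id_Icc c hc,
    ← ENNReal.div_eq_inv_mul, ← ENNReal.ofReal_div_of_pos hc]
  congr 1; field_simp

lemma lintegral_one_sub_Icc (c : ℝ) (hc : 0 < c) :
    ∫⁻ x in Icc 0 c, ENNReal.ofReal (1 - x/c) = ENNReal.ofReal (c/2) := by
  rw [← ofReal_integral_eq_lintegral_ofReal]
  · rw [integral_Icc_eq_integral_Ioc, ← intervalIntegral.integral_of_le hc.le]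
    have : ∫ x in (0:ℝ)..c, (1 - x/c) = c - (c^2/2)/c := by
      rw [intervalIntegral.integral_sub (intervalIntegrable_const (c := (1:ℝ)))
        ((intervalIntegral.intervalIntegrable_id).div_const c),
        intervalIntegral.integral_div, integral_id, intervalIntegral.integral_const]
      field_simp
      simp only [smul_eq_mul]; ring
    rw [this]; congr 1; field_simp; ring
  · exact ((continuous_const.sub (continuous_id.div_const c)).integrableOn_Icc)
  · filter_upwards [ae_restrict_mem measurableSet_Icc] with x hx
    have h1 : x / c ≤ 1 := by rw [div_le_one hc]; exact hx.2
    simp only [Pi.zero_apply]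
    linarith

lemma unif_mean_one_sub (c : ℝ) (hc : 0 < c) :
    ∫⁻ x, ENNReal.ofReal (1 - x/c) ∂(unif c) = ENNReal.ofReal (1/2) := by
  rw [unif, lintegral_smul_measure, smul_eq_mul, lintegral_one_sub_Icc c hc,
    ← ENNReal.div_eq_inv_mul, ← ENNReal.ofReal_div_of_pos hc]
  congr 1; field_simp; try ring

lemma unif_Iic_le (c : ℝ) (hc : 0 < c) (z : ℝ) :
    unif c (Iic z) ≤ ENNReal.ofReal z / ENNReal.ofReal c := by
  rw [unif_apply c _ measurableSet_Iic]
  have hsub : Iic z ∩ Icc 0 c ⊆ Icc 0 z := by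
    rintro x ⟨h1, h2, _⟩; exact ⟨h2, h1⟩
  calc (ENNReal.ofReal c)⁻¹ * volume (Iic z ∩ Icc 0 c)
      ≤ (ENNReal.ofReal c)⁻¹ * volume (Icc 0 z) :=
        mul_le_mul_right (measure_mono hsub) _
    _ = ENNReal.ofReal z / ENNReal.ofReal c := by
        rw [Real.volume_Icc, sub_zero, ENNReal.div_eq_inv_mul]

lemma unif_tail_ge (c : ℝ) (hc : 0 < c) (x : ℝ) (hx : 0 ≤ x) :
    ENNReal.ofReal (1 - x/c) ≤ unif c {z | x ≤ z} := by
  have hsub : Icc x c ⊆ {z | x ≤ z} ∩ Icc 0 c := by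
    rintro y ⟨h1, h2⟩; exact ⟨h1, le_trans hx h1, h2⟩
  calc ENNReal.ofReal (1 - x/c) = (ENNReal.ofReal c)⁻¹ * ENNReal.ofReal (c - x) := by
        rw [← ENNReal.div_eq_inv_mul, ← ENNReal.ofReal_div_of_pos hc]
        congr 1; field_simp; try ring
    _ ≤ (ENNReal.ofReal c)⁻¹ * volume ({z | x ≤ z} ∩ Icc 0 c) := by
        rw [← Real.volume_Icc (a := x) (b := c)]
        exact mul_le_mul_right (measure_mono hsub) _
    _ = unif c {z | x ≤ z} := by
        rw [unif_apply c {z | x ≤ z} (measurableSet_Ici : MeasurableSet (Ici x))]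

lemma red_guarantee (B R u q c V : ℝ) (hB : 0 < B) (hR : 0 < R) (hu0 : 0 ≤ u)
    (hu : (0:ℝ) < 1 - u) (hq0 : 0 < q) (hq1 : q ≤ 1) (hc : 0 < c)
    (hRc : R / c = q / 2) (hqB : q * B + (1 - q) * u * R = R)
    (hVq' : V = u * (1 - q/2) + (1 - u) * (1 - q) + q / 2)
    (σR : RedStrategy R)
    (hμR : σR.μ = ENNReal.ofReal (1 - q) • Measure.dirac 0 + ENNReal.ofReal q • unif c)
    (hμRbudget : ∫⁻ x, ENNReal.ofReal x ∂σR.μ = ENNReal.ofReal R)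
    (σB' : BlueStrategy B R u) : payoff σB' σR ≤ ENNReal.ofReal V := by
  haveI := σR.prob
  haveI := σB'.prob
  set υ : Measure ℝ := unif c with hυ_def
  set μR : Measure ℝ := σR.μ with hμR_def'
  have hlint : ∀ f : ℝ → ℝ≥0∞, ∫⁻ x, f x ∂μR
      = ENNReal.ofReal (1 - q) * f 0 + ENNReal.ofReal q * ∫⁻ x, f x ∂υ := by
    intro f
    rw [hμR, lintegral_add_measure, lintegral_smul_measure, lintegral_smul_measure,
      lintegral_dirac, smul_eq_mul, smul_eq_mul]
  set t := σB'.t with ht_def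
  set ν := σB'.ν with hν_def
  set T := ∫⁻ x, ENNReal.ofReal (t x * x) ∂μR with hT_def
  set ZE := ∫⁻ z, ENNReal.ofReal z ∂ν with hZE_def
  have hbudget : ENNReal.ofReal u * T + ENNReal.ofReal (1 - u) * ZE ≤ ENNReal.ofReal B :=
    σB'.budget σR
  have haeIcc : ∀ᵐ x ∂μR, x ∈ Icc (0:ℝ) c := by
    rw [ae_iff]
    have hset : {x : ℝ | ¬ x ∈ Icc (0:ℝ) c} = (Icc (0:ℝ) c)ᶜ := rfl
    have h1 : Measure.dirac (0:ℝ) ((Icc (0:ℝ) c)ᶜ) = 0 := by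
      rw [Measure.dirac_apply' _ measurableSet_Icc.compl]
      simp [hc.le]
    have h2 : υ ((Icc (0:ℝ) c)ᶜ) = 0 := by
      rw [hυ_def, unif_apply _ _ measurableSet_Icc.compl, compl_inter_self]
      simp
    rw [hset, hμR, Measure.add_apply, Measure.smul_apply, Measure.smul_apply, h1, h2]
    simp
  have hT : T ≤ ENNReal.ofReal R := by
    rw [← hμRbudget, hT_def]
    refine lintegral_mono_ae ?_
    filter_upwards [haeIcc] with x hx
    exact ENNReal.ofReal_le_ofReal (by nlinarith [(σB'.t_mem x).1, (σB'.t_mem x).2, hx.1])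
  have hmul_mble : Measurable fun x : ℝ => ENNReal.ofReal (t x * x) :=
    (σB'.t_mble.mul measurable_id).ennreal_ofReal
  have hI1 : ∫⁻ x, ENNReal.ofReal (t x) ∂μR
      ≤ ENNReal.ofReal (1 - q/2) + T / ENNReal.ofReal c := by
    calc ∫⁻ x, ENNReal.ofReal (t x) ∂μR
        ≤ ∫⁻ x, (ENNReal.ofReal (t x * x) / ENNReal.ofReal c
            + ENNReal.ofReal (1 - x/c)) ∂μR := by
          refine lintegral_mono_ae ?_
          filter_upwards [haeIcc] with x hx
          have h1 := (σB'.t_mem x).1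
          have h2 := (σB'.t_mem x).2
          have h3 : x / c ≤ 1 := by rw [div_le_one hc]; exact hx.2
          have hreal : t x ≤ t x * x / c + (1 - x/c) := by
            have hp : 0 ≤ (1 - t x) * (1 - x/c) :=
              mul_nonneg (by linarith) (by linarith)
            have hexp : (1 - t x) * (1 - x/c) = 1 - x/c - t x + t x * (x/c) := by ring
            have hd : t x * x / c = t x * (x / c) := by ring
            rw [hexp] at hp
            rw [hd]
            linarith
          calc ENNReal.ofReal (t x)
              ≤ ENNReal.ofReal (t x * x / c + (1 - x/c)) :=
                ENNReal.ofReal_le_ofReal hreal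
            _ ≤ ENNReal.ofReal (t x * x / c) + ENNReal.ofReal (1 - x/c) :=
                ENNReal.ofReal_add_le
            _ = _ := by rw [ENNReal.ofReal_div_of_pos hc]
      _ = T / ENNReal.ofReal c + ∫⁻ x, ENNReal.ofReal (1 - x/c) ∂μR := by
          rw [lintegral_add_left (hmul_mble.div_const _)]
          congr 1
          simp_rw [ENNReal.div_eq_inv_mul]
          rw [lintegral_const_mul _ hmul_mble]
      _ = T / ENNReal.ofReal c + ENNReal.ofReal (1 - q/2) := by
          congr 1
          rw [hlint (fun x => ENNReal.ofReal (1 - x/c)), hυ_def, unif_mean_one_sub c hc]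
          norm_num
          rw [← ENNReal.ofReal_mul hq0.le,
            ← ENNReal.ofReal_add (by linarith) (by positivity)]
          congr 1
          ring
      _ = ENNReal.ofReal (1 - q/2) + T / ENNReal.ofReal c := add_comm _ _
  -- Fubini swap for the second term
  set F : ℝ × ℝ → ℝ≥0∞ := fun p => if p.1 ≤ p.2 then 1 else 0 with hF_def
  have hFm : Measurable F :=
    Measurable.ite (measurableSet_le measurable_fst measurable_snd)
      measurable_const measurable_const
  have hFx : ∀ x : ℝ, ∫⁻ z, F (x, z) ∂ν = ν {z | x ≤ z} := by
    intro x
    have h : ∀ z : ℝ, F (x, z) = (Ici x).indicator (1 : ℝ → ℝ≥0∞) z := by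
      intro z; simp [hF_def, Set.indicator_apply, mem_Ici]
    simp_rw [h]
    rw [lintegral_indicator_one measurableSet_Ici]
    rfl
  have hFz : ∀ z : ℝ, ∫⁻ x, F (x, z) ∂μR = μR (Iic z) := by
    intro z
    have h : ∀ x : ℝ, F (x, z) = (Iic z).indicator (1 : ℝ → ℝ≥0∞) x := by
      intro x; simp [hF_def, Set.indicator_apply, mem_Iic]
    simp_rw [h]
    exact lintegral_indicator_one measurableSet_Iic
  have hswap : ∫⁻ x, ν {z | x ≤ z} ∂μR = ∫⁻ z, μR (Iic z) ∂ν := by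
    simp_rw [← hFx, ← hFz]
    exact lintegral_lintegral_swap hFm.aemeasurable
  have hμRIic : ∀ z : ℝ, μR (Iic z)
      ≤ ENNReal.ofReal (1 - q) + ENNReal.ofReal q
          * (ENNReal.ofReal z / ENNReal.ofReal c) := by
    intro z
    rw [hμR, Measure.add_apply, Measure.smul_apply, Measure.smul_apply,
      smul_eq_mul, smul_eq_mul]
    have hd : Measure.dirac (0:ℝ) (Iic z) ≤ 1 := prob_le_one
    have hv : υ (Iic z) ≤ ENNReal.ofReal z / ENNReal.ofReal c := by
      rw [hυ_def]; exact unif_Iic_le c hc z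
    calc ENNReal.ofReal (1-q) * Measure.dirac (0:ℝ) (Iic z) + ENNReal.ofReal q * υ (Iic z)
        ≤ ENNReal.ofReal (1-q) * 1
          + ENNReal.ofReal q * (ENNReal.ofReal z / ENNReal.ofReal c) :=
          add_le_add (mul_le_mul_right hd _) (mul_le_mul_right hv _)
      _ = _ := by rw [mul_one]
  have hI2 : ∫⁻ x, ν {z | x ≤ z} ∂μR
      ≤ ENNReal.ofReal (1 - q) + ENNReal.ofReal q * (ZE / ENNReal.ofReal c) := by
    rw [hswap]
    calc ∫⁻ z, μR (Iic z) ∂ν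
        ≤ ∫⁻ z, (ENNReal.ofReal (1 - q) + ENNReal.ofReal q
            * (ENNReal.ofReal z / ENNReal.ofReal c)) ∂ν := lintegral_mono hμRIic
      _ = ENNReal.ofReal (1 - q) + ENNReal.ofReal q * (ZE / ENNReal.ofReal c) := by
          rw [lintegral_add_left measurable_const, lintegral_const, measure_univ, mul_one]
          congr 1
          rw [lintegral_const_mul _ (ENNReal.measurable_ofReal.div_const _)]
          congr 1
          simp_rw [ENNReal.div_eq_inv_mul]
          rw [lintegral_const_mul _ ENNReal.measurable_ofReal]
  have hkey : ENNReal.ofReal u * T + ENNReal.ofReal (1-u) * (ENNReal.ofReal q * ZE)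
      ≤ ENNReal.ofReal R := by
    have hsplit : ENNReal.ofReal u = ENNReal.ofReal q * ENNReal.ofReal u
        + ENNReal.ofReal ((1-q)*u) := by
      rw [← ENNReal.ofReal_mul hq0.le,
        ← ENNReal.ofReal_add (mul_nonneg hq0.le hu0) (mul_nonneg (by linarith) hu0)]
      congr 1; ring
    calc ENNReal.ofReal u * T + ENNReal.ofReal (1-u) * (ENNReal.ofReal q * ZE)
        = ENNReal.ofReal q * (ENNReal.ofReal u * T + ENNReal.ofReal (1-u) * ZE)
          + ENNReal.ofReal ((1-q)*u) * T := by
          conv_lhs => rw [hsplit]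
          ring
      _ ≤ ENNReal.ofReal q * ENNReal.ofReal B + ENNReal.ofReal ((1-q)*u) * ENNReal.ofReal R :=
          add_le_add (mul_le_mul_right hbudget _) (mul_le_mul_right hT _)
      _ = ENNReal.ofReal R := by
          rw [← ENNReal.ofReal_mul hq0.le, ← ENNReal.ofReal_mul (mul_nonneg (by linarith) hu0),
            ← ENNReal.ofReal_add (mul_nonneg hq0.le hB.le)
              (mul_nonneg (mul_nonneg (by linarith) hu0) hR.le)]
          congr 1
          try nlinarith [hqB]
  rw [payoff]
  calc ENNReal.ofReal u * ∫⁻ x, ENNReal.ofReal (t x) ∂μR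
      + ENNReal.ofReal (1-u) * ∫⁻ x, ν {z | x ≤ z} ∂μR
      ≤ ENNReal.ofReal u * (ENNReal.ofReal (1 - q/2) + T / ENNReal.ofReal c)
        + ENNReal.ofReal (1-u) * (ENNReal.ofReal (1 - q)
          + ENNReal.ofReal q * (ZE / ENNReal.ofReal c)) :=
        add_le_add (mul_le_mul_right hI1 _) (mul_le_mul_right hI2 _)
    _ = ENNReal.ofReal u * ENNReal.ofReal (1 - q/2)
        + ENNReal.ofReal (1-u) * ENNReal.ofReal (1 - q)
        + (ENNReal.ofReal u * T + ENNReal.ofReal (1-u) * (ENNReal.ofReal q * ZE))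
          / ENNReal.ofReal c := by
        simp_rw [div_eq_mul_inv]; ring
    _ ≤ ENNReal.ofReal u * ENNReal.ofReal (1 - q/2)
        + ENNReal.ofReal (1-u) * ENNReal.ofReal (1 - q)
        + ENNReal.ofReal R / ENNReal.ofReal c :=
        add_le_add_right (ENNReal.div_le_div_right hkey _) _
    _ = ENNReal.ofReal V := by
        rw [← ENNReal.ofReal_div_of_pos hc, hRc, ← ENNReal.ofReal_mul hu0,
          ← ENNReal.ofReal_mul hu.le,
          ← ENNReal.ofReal_add (mul_nonneg hu0 (by linarith))
            (mul_nonneg hu.le (by linarith)),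
          ← ENNReal.ofReal_add (by nlinarith) (by positivity)]
        congr 1
        rw [hVq']

/-- In GL-S(B,R,u) with B, R > 0, u ∈ [0,1) and B/R ≥ 1, the value of the
game equals 1 - (1-u)²/(2((B/R) - u)). -/
theorem stmt_9 (B R u : ℝ) (hB : 0 < B) (hR : 0 < R)
    (hu0 : 0 ≤ u) (hu1 : u < 1) (hcase : 1 ≤ B / R) :
    ∃ (σB : BlueStrategy B R u) (σR : RedStrategy R),
      (∀ σR' : RedStrategy R,
        ENNReal.ofReal (1 - (1 - u) ^ 2 / (2 * (B / R - u))) ≤ payoff σB σR') ∧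
      (∀ σB' : BlueStrategy B R u,
        payoff σB' σR ≤ ENNReal.ofReal (1 - (1 - u) ^ 2 / (2 * (B / R - u)))) := by
  have hu : (0:ℝ) < 1 - u := by linarith
  have hbu : (0:ℝ) < B / R - u := by linarith
  set q : ℝ := (1 - u) / (B / R - u) with hq_def
  have hq0 : 0 < q := div_pos hu hbu
  have hq1 : q ≤ 1 := by
    rw [hq_def, div_le_one hbu]; linarith
  set c : ℝ := 2 * R / q with hc_def
  have hc : 0 < c := by positivity
  have hRc : R / c = q / 2 := by rw [hc_def]; field_simp
  have hc2 : q * (c / 2) = R := by rw [hc_def]; field_simp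
  have hBRq : (1 - u) = q * (B / R - u) := by
    rw [hq_def, div_mul_cancel₀ _ hbu.ne']
  have hBc : u * R + (1 - u) * (c / 2) = B := by
    have h1 : (1-u) * (c/2) = q * (B/R - u) * (c/2) := by rw [← hBRq]
    have h2 : q * (c/2) = R := hc2
    have : q * (B/R-u) * (c/2) = (B/R - u) * R := by rw [mul_comm q, mul_assoc, h2]
    rw [h1, this]; field_simp; ring
  have hqB : q * B + (1 - q) * u * R = R := by
    have h1 : q * (B / R - u) * R = (1 - u) * R := by rw [← hBRq]
    have h2 : q * (B / R - u) * R = q * B - q * u * R := by field_simp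
    nlinarith [h1, h2]
  set V : ℝ := 1 - (1 - u) ^ 2 / (2 * (B / R - u)) with hV_def
  have hVq : V = u + (1 - u) * (1 - q / 2) := by
    rw [hV_def, hq_def]; field_simp; ring
  have hVq' : V = u * (1 - q/2) + (1 - u) * (1 - q) + q / 2 := by
    rw [hVq]; ring
  -- the measures
  set υ : Measure ℝ := unif c with hυ_def
  haveI hυprob : IsProbabilityMeasure υ := unif_prob c hc
  set μR : Measure ℝ := ENNReal.ofReal (1 - q) • Measure.dirac 0 + ENNReal.ofReal q • υ
    with hμR_def
  have hlint : ∀ f : ℝ → ℝ≥0∞, ∫⁻ x, f x ∂μR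
      = ENNReal.ofReal (1 - q) * f 0 + ENNReal.ofReal q * ∫⁻ x, f x ∂υ := by
    intro f
    rw [hμR_def, lintegral_add_measure, lintegral_smul_measure, lintegral_smul_measure,
      lintegral_dirac, smul_eq_mul, smul_eq_mul]
  haveI hμRprob : IsProbabilityMeasure μR := by
    constructor
    rw [hμR_def, Measure.add_apply, Measure.smul_apply, Measure.smul_apply,
      Measure.dirac_apply_of_mem (mem_univ 0), measure_univ, smul_eq_mul, smul_eq_mul,
      mul_one, mul_one, ← ENNReal.ofReal_add (by linarith) hq0.le]
    norm_num
  have hμRnonneg : μR (Iio 0) = 0 := by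
    rw [hμR_def, Measure.add_apply, Measure.smul_apply, Measure.smul_apply,
      unif_nonneg, Measure.dirac_apply' _ measurableSet_Iio]
    simp
  have hμRbudget : ∫⁻ x, ENNReal.ofReal x ∂μR = ENNReal.ofReal R := by
    rw [hlint, unif_mean c hc, ENNReal.ofReal_zero, mul_zero, zero_add,
      ← ENNReal.ofReal_mul hq0.le, hc2]
  refine ⟨⟨fun _ => 1, measurable_const, fun x => ⟨zero_le_one, le_refl 1⟩, υ, hυprob,
      unif_nonneg c, ?_⟩,
    ⟨μR, hμRprob, hμRnonneg, le_of_eq hμRbudget⟩, ?_, ?_⟩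
  · -- Blue budget
    intro σR'
    have h1 : ∫⁻ x, ENNReal.ofReal (1 * x) ∂σR'.μ ≤ ENNReal.ofReal R := by
      simpa using σR'.budget
    calc ENNReal.ofReal u * ∫⁻ x, ENNReal.ofReal (1 * x) ∂σR'.μ
          + ENNReal.ofReal (1 - u) * ∫⁻ z, ENNReal.ofReal z ∂υ
        ≤ ENNReal.ofReal u * ENNReal.ofReal R
          + ENNReal.ofReal (1 - u) * ENNReal.ofReal (c/2) := by
          rw [unif_mean c hc]; exact add_le_add_left (mul_le_mul_right h1 _) _
      _ = ENNReal.ofReal B := by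
          rw [← ENNReal.ofReal_mul hu0, ← ENNReal.ofReal_mul hu.le,
            ← ENNReal.ofReal_add (by positivity) (by positivity), hBc]
  · -- lower bound: Blue guarantees V against any Red
    intro σR'
    have hae : ∀ᵐ x ∂σR'.μ, (0:ℝ) ≤ x := by
      rw [ae_iff]; simp only [not_le]; exact σR'.nonneg
    have hI1 : ∫⁻ _, ENNReal.ofReal (1:ℝ) ∂σR'.μ = 1 := by
      haveI := σR'.prob
      simp
    have hmble : Measurable fun x : ℝ => ENNReal.ofReal (1 - x/c) :=
      (measurable_const.sub (measurable_id.div_const c)).ennreal_ofReal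
    have hsum : (1:ℝ≥0∞) ≤ (∫⁻ x, ENNReal.ofReal (1 - x/c) ∂σR'.μ)
        + ∫⁻ x, ENNReal.ofReal (x/c) ∂σR'.μ := by
      rw [← lintegral_add_left hmble]
      calc (1:ℝ≥0∞) = ∫⁻ _, ENNReal.ofReal (1:ℝ) ∂σR'.μ := hI1.symm
        _ ≤ _ := by
            refine lintegral_mono fun x => ?_
            have h : ENNReal.ofReal (1:ℝ) = ENNReal.ofReal ((1 - x/c) + x/c) := by norm_num
            rw [h]; exact ENNReal.ofReal_add_le
    have hxc : ∫⁻ x, ENNReal.ofReal (x/c) ∂σR'.μ ≤ ENNReal.ofReal (q/2) := by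
      have : ∀ x : ℝ, ENNReal.ofReal (x/c) = ENNReal.ofReal x / ENNReal.ofReal c :=
        fun x => ENNReal.ofReal_div_of_pos hc
      simp_rw [this, ENNReal.div_eq_inv_mul, lintegral_const_mul _ ENNReal.measurable_ofReal]
      calc (ENNReal.ofReal c)⁻¹ * ∫⁻ x, ENNReal.ofReal x ∂σR'.μ
          ≤ (ENNReal.ofReal c)⁻¹ * ENNReal.ofReal R := mul_le_mul_right σR'.budget _
        _ = ENNReal.ofReal (q/2) := by
            rw [← ENNReal.div_eq_inv_mul, ← ENNReal.ofReal_div_of_pos hc, hRc]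
    have hA : ENNReal.ofReal (1 - q/2) ≤ ∫⁻ x, ENNReal.ofReal (1 - x/c) ∂σR'.μ := by
      have h1 : (1:ℝ≥0∞) ≤ (∫⁻ x, ENNReal.ofReal (1 - x/c) ∂σR'.μ) + ENNReal.ofReal (q/2) :=
        le_trans hsum (add_le_add_right hxc _)
      have h2 : (1:ℝ≥0∞) - ENNReal.ofReal (q/2) ≤ ∫⁻ x, ENNReal.ofReal (1 - x/c) ∂σR'.μ :=
        tsub_le_iff_right.2 h1
      calc ENNReal.ofReal (1 - q/2) = 1 - ENNReal.ofReal (q/2) := by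
            rw [ENNReal.ofReal_sub _ (by positivity), ENNReal.ofReal_one]
        _ ≤ _ := h2
    have hI2 : ENNReal.ofReal (1 - q/2) ≤ ∫⁻ x, υ {z | x ≤ z} ∂σR'.μ := by
      refine le_trans hA (lintegral_mono_ae ?_)
      filter_upwards [hae] with x hx
      exact unif_tail_ge c hc x hx
    calc ENNReal.ofReal V = ENNReal.ofReal u * 1 + ENNReal.ofReal (1-u) * ENNReal.ofReal (1 - q/2) := by
          rw [mul_one, ← ENNReal.ofReal_mul hu.le,
            ← ENNReal.ofReal_add hu0 (by nlinarith), hVq]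
      _ ≤ payoff _ σR' := by
          rw [payoff, hI1]
          exact add_le_add_right (mul_le_mul_right hI2 _) _
  · -- upper bound: Red guarantees V against any Blue
    exact red_guarantee B R u q c V hB hR hu0 hu hq0 hq1 hc hRc hqB hVq'
      ⟨μR, hμRprob, hμRnonneg, le_of_eq hμRbudget⟩ rfl hμRbudget
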